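/- With Q^{αβ}(x,y) = Σ_k σ_k^α(x) σ_k^β(y) for C² vector fields σ_k with locally uniformly convergent sums of derivatives, the double Lie bracket satisfies, componentwise, Σ_k [σ_k,[σ_k,B]]^α(x) = Σ_{i,j} Q^{ij}(x,x) ∂_i∂_j B^α + Σ_i (Σ_γ ∂_γ^{(2)}Q^{γi}(x,x)) ∂_i B^α − 2Σ_{i,β} ∂_β^{(2)}Q^{iα}(x,x) ∂_i B^β + Σ_β (Σ_γ ∂_β^{(1)}∂_γ^{(2)}Q^{γα}(x,x) − Σ_γ ∂_γ^{(2)}∂_β^{(2)}Q^{γα}(x,x)) B^β, for every C² vector field B. -/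

import Mathlib

/-- Partial derivative `∂_i f x` of a scalar function on `ℝ^d`. -/
noncomputable def pd {d : ℕ} (i : Fin d) (f : (Fin d → ℝ) → ℝ) (x : Fin d → ℝ) : ℝ :=
  fderiv ℝ f x (Pi.single i 1)

/-- Derivative `∂_i^{(1)}` of a two-point function in its first argument. -/
noncomputable def pd1 {d : ℕ} (i : Fin d) (F : (Fin d → ℝ) → (Fin d → ℝ) → ℝ)
    (x y : Fin d → ℝ) : ℝ :=
  pd i (fun z => F z y) x

/-- Derivative `∂_i^{(2)}` of a two-point function in its second argument. -/
noncomputable def pd2 {d : ℕ} (i : Fin d) (F : (Fin d → ℝ) → (Fin d → ℝ) → ℝ)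
    (x y : Fin d → ℝ) : ℝ :=
  pd i (F x) y

/-- Lie bracket `[A,B]^α = Σ_i (A^i ∂_i B^α − B^i ∂_i A^α)`. -/
noncomputable def lieBracket {d : ℕ} (A B : (Fin d → ℝ) → Fin d → ℝ)
    (x : Fin d → ℝ) (α : Fin d) : ℝ :=
  (∑ i, A x i * pd i (fun y => B y α) x) - (∑ i, B x i * pd i (fun y => A y α) x)

section helpers
variable {d : ℕ}

lemma contDiff_pd {f : (Fin d → ℝ) → ℝ} (hf : ContDiff ℝ 2 f) (i : Fin d) :
    ContDiff ℝ 1 (pd i f) :=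
  (hf.fderiv_right (m := 1) (by norm_num)).clm_apply contDiff_const

lemma pd_mul {f g : (Fin d → ℝ) → ℝ} {x : Fin d → ℝ} (i : Fin d)
    (hf : DifferentiableAt ℝ f x) (hg : DifferentiableAt ℝ g x) :
    pd i (fun y => f y * g y) x = pd i f x * g x + f x * pd i g x := by
  simp only [pd, fderiv_fun_mul hf hg, ContinuousLinearMap.add_apply,
    ContinuousLinearMap.smul_apply, smul_eq_mul]
  ring

lemma pd_sub {f g : (Fin d → ℝ) → ℝ} {x : Fin d → ℝ} (i : Fin d)
    (hf : DifferentiableAt ℝ f x) (hg : DifferentiableAt ℝ g x) :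
    pd i (fun y => f y - g y) x = pd i f x - pd i g x := by
  simp only [pd, fderiv_fun_sub hf hg]; simp

lemma pd_sum {ι : Type*} (s : Finset ι) (f : ι → (Fin d → ℝ) → ℝ) {x : Fin d → ℝ} (i : Fin d)
    (h : ∀ j ∈ s, DifferentiableAt ℝ (f j) x) :
    pd i (fun y => ∑ j ∈ s, f j y) x = ∑ j ∈ s, pd i (f j) x := by
  simp only [pd, fderiv_fun_sum h]; simp

lemma lie2_expand (A B : (Fin d → ℝ) → Fin d → ℝ) (hA : ContDiff ℝ 2 A)
    (hB : ContDiff ℝ 2 B) (x : Fin d → ℝ) (α : Fin d) :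
    lieBracket A (fun y β => lieBracket A B y β) x α =
      (∑ i, ∑ j, (A x i * (pd i (fun z => A z j) x * pd j (fun y => B y α) x)
          + A x i * (A x j * pd i (fun y => pd j (fun z => B z α) y) x)))
      - (∑ i, ∑ j, (A x i * (pd i (fun y => B y j) x * pd j (fun z => A z α) x)
          + A x i * (B x j * pd i (fun y => pd j (fun z => A z α) y) x)))
      - ((∑ i, ∑ j, (A x j * pd j (fun y => B y i) x) * pd i (fun z => A z α) x)
        - (∑ i, ∑ j, (B x j * pd j (fun z => A z i) x) * pd i (fun z => A z α) x)) := by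
  have hAc : ∀ γ : Fin d, ContDiff ℝ 2 (fun y => A y γ) := fun γ => contDiff_pi.mp hA γ
  have hBc : ∀ γ : Fin d, ContDiff ℝ 2 (fun y => B y γ) := fun γ => contDiff_pi.mp hB γ
  have dA : ∀ (γ : Fin d) (y : Fin d → ℝ), DifferentiableAt ℝ (fun z => A z γ) y :=
    fun γ y => ((hAc γ).differentiable (by norm_num)).differentiableAt
  have dB : ∀ (γ : Fin d) (y : Fin d → ℝ), DifferentiableAt ℝ (fun z => B z γ) y :=
    fun γ y => ((hBc γ).differentiable (by norm_num)).differentiableAt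
  have dpdA : ∀ (i γ : Fin d) (y : Fin d → ℝ),
      DifferentiableAt ℝ (pd i (fun z => A z γ)) y :=
    fun i γ y => ((contDiff_pd (hAc γ) i).differentiable (by norm_num)).differentiableAt
  have dpdB : ∀ (i γ : Fin d) (y : Fin d → ℝ),
      DifferentiableAt ℝ (pd i (fun z => B z γ)) y :=
    fun i γ y => ((contDiff_pd (hBc γ) i).differentiable (by norm_num)).differentiableAt
  have key : ∀ i : Fin d,
      pd i (fun y => (∑ j, A y j * pd j (fun z => B z α) y)
          - ∑ j, B y j * pd j (fun z => A z α) y) x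
      = (∑ j, (pd i (fun z => A z j) x * pd j (fun z => B z α) x
            + A x j * pd i (fun y => pd j (fun z => B z α) y) x))
        - (∑ j, (pd i (fun z => B z j) x * pd j (fun z => A z α) x
            + B x j * pd i (fun y => pd j (fun z => A z α) y) x)) := by
    intro i
    rw [pd_sub i (DifferentiableAt.fun_sum (A := fun j y => A y j * pd j (fun z => B z α) y) fun j _ => (dA j x).mul (dpdB j α x))
        (DifferentiableAt.fun_sum (A := fun j y => B y j * pd j (fun z => A z α) y) fun j _ => (dB j x).mul (dpdA j α x)),
      pd_sum Finset.univ (fun j y => A y j * pd j (fun z => B z α) y) i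
        (fun j _ => (dA j x).mul (dpdB j α x)),
      pd_sum Finset.univ (fun j y => B y j * pd j (fun z => A z α) y) i
        (fun j _ => (dB j x).mul (dpdA j α x))]
    congr 1
    · exact Finset.sum_congr rfl fun j _ => pd_mul i (dA j x) (dpdB j α x)
    · exact Finset.sum_congr rfl fun j _ => pd_mul i (dB j x) (dpdA j α x)
  simp only [lieBracket]
  simp only [key]
  simp only [mul_sub, Finset.mul_sum, sub_mul, Finset.sum_mul, mul_add,
    Finset.sum_add_distrib, Finset.sum_sub_distrib]

end helpers

/-- with `Q^{αβ}(x,y) = Σ_k σ_k^α(x) σ_k^β(y)` (the sums of the fields and of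
their termwise derivatives converging to `Q` and to its corresponding derivatives), the double
Lie brackets satisfy, componentwise,
`Σ_k [σ_k,[σ_k,B]]^α(x) = Σ_{i,j} Q^{ij}(x,x) ∂_i∂_j B^α
  + Σ_i (Σ_γ ∂_γ^{(2)}Q^{γi}(x,x)) ∂_i B^α − 2 Σ_{i,β} ∂_β^{(2)}Q^{iα}(x,x) ∂_i B^β
  + Σ_β (Σ_γ ∂_β^{(1)}∂_γ^{(2)}Q^{γα}(x,x) − Σ_γ ∂_γ^{(2)}∂_β^{(2)}Q^{γα}(x,x)) B^β`. -/


theorem stmt9 {d : ℕ} (σ : ℕ → (Fin d → ℝ) → Fin d → ℝ)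
    (Q : (Fin d → ℝ) → (Fin d → ℝ) → Fin d → Fin d → ℝ)
    (hσreg : ∀ k, ContDiff ℝ 2 (σ k))
    (h0 : ∀ x y α β, HasSum (fun k => σ k x α * σ k y β) (Q x y α β))
    (h1 : ∀ (i : Fin d) x y α β,
      HasSum (fun k => pd i (fun z => σ k z α) x * σ k y β)
        (pd1 i (fun x' y' => Q x' y' α β) x y))
    (h2 : ∀ (i : Fin d) x y α β,
      HasSum (fun k => σ k x α * pd i (fun z => σ k z β) y)
        (pd2 i (fun x' y' => Q x' y' α β) x y))
    (h12 : ∀ (i j : Fin d) x y α β,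
      HasSum (fun k => pd i (fun z => σ k z α) x * pd j (fun z => σ k z β) y)
        (pd1 i (fun x' y' => pd2 j (fun x'' y'' => Q x'' y'' α β) x' y') x y))
    (h22 : ∀ (i j : Fin d) x y α β,
      HasSum (fun k => σ k x α * pd i (fun z => pd j (fun w => σ k w β) z) y)
        (pd2 i (fun x' y' => pd2 j (fun x'' y'' => Q x'' y'' α β) x' y') x y))
    (B : (Fin d → ℝ) → Fin d → ℝ) (hB : ContDiff ℝ 2 B) (x : Fin d → ℝ) (α : Fin d) :
    HasSum (fun k => lieBracket (σ k) (fun y β => lieBracket (σ k) B y β) x α)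
      ((∑ i, ∑ j, Q x x i j * pd i (fun y => pd j (fun z => B z α) y) x)
        + (∑ i, (∑ γ, pd2 γ (fun x' y' => Q x' y' γ i) x x) * pd i (fun y => B y α) x)
        - 2 * ∑ i, ∑ β, pd2 β (fun x' y' => Q x' y' i α) x x * pd i (fun y => B y β) x
        + ∑ β, ((∑ γ, pd1 β (fun x' y' => pd2 γ (fun x'' y'' => Q x'' y'' γ α) x' y') x x)
            - ∑ γ, pd2 γ (fun x' y' => pd2 β (fun x'' y'' => Q x'' y'' γ α) x' y') x x)
          * B x β) := by
  -- componentwise HasSum facts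
  have hs1 : ∀ i j : Fin d,
      HasSum (fun k => σ k x i * (pd i (fun z => σ k z j) x * pd j (fun y => B y α) x))
        (pd2 i (fun x' y' => Q x' y' i j) x x * pd j (fun y => B y α) x) := by
    intro i j
    simpa [mul_assoc] using (h2 i x x i j).mul_right (pd j (fun y => B y α) x)
  have hs2 : ∀ i j : Fin d,
      HasSum (fun k => σ k x i * (σ k x j * pd i (fun y => pd j (fun z => B z α) y) x))
        (Q x x i j * pd i (fun y => pd j (fun z => B z α) y) x) := by
    intro i j
    simpa [mul_assoc] using (h0 x x i j).mul_right (pd i (fun y => pd j (fun z => B z α) y) x)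
  have hs3 : ∀ i j : Fin d,
      HasSum (fun k => σ k x i * (pd i (fun y => B y j) x * pd j (fun z => σ k z α) x))
        (pd2 j (fun x' y' => Q x' y' i α) x x * pd i (fun y => B y j) x) := by
    intro i j
    simpa [mul_comm, mul_left_comm, mul_assoc] using
      (h2 j x x i α).mul_right (pd i (fun y => B y j) x)
  have hs4 : ∀ i j : Fin d,
      HasSum (fun k => σ k x i * (B x j * pd i (fun y => pd j (fun z => σ k z α) y) x))
        (pd2 i (fun x' y' => pd2 j (fun x'' y'' => Q x'' y'' i α) x' y') x x * B x j) := by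
    intro i j
    simpa [mul_comm, mul_left_comm, mul_assoc] using (h22 i j x x i α).mul_right (B x j)
  have hs5 : ∀ i j : Fin d,
      HasSum (fun k => (σ k x j * pd j (fun y => B y i) x) * pd i (fun z => σ k z α) x)
        (pd2 i (fun x' y' => Q x' y' j α) x x * pd j (fun y => B y i) x) := by
    intro i j
    simpa [mul_comm, mul_left_comm, mul_assoc] using
      (h2 i x x j α).mul_right (pd j (fun y => B y i) x)
  have hs6 : ∀ i j : Fin d,
      HasSum (fun k => (B x j * pd j (fun z => σ k z i) x) * pd i (fun z => σ k z α) x)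
        (pd1 j (fun x' y' => pd2 i (fun x'' y'' => Q x'' y'' i α) x' y') x x * B x j) := by
    intro i j
    simpa [mul_comm, mul_left_comm, mul_assoc] using (h12 j i x x i α).mul_right (B x j)
  have HS12 : HasSum
      (fun k => ∑ i, ∑ j, (σ k x i * (pd i (fun z => σ k z j) x * pd j (fun y => B y α) x)
        + σ k x i * (σ k x j * pd i (fun y => pd j (fun z => B z α) y) x)))
      (∑ i, ∑ j, (pd2 i (fun x' y' => Q x' y' i j) x x * pd j (fun y => B y α) x
        + Q x x i j * pd i (fun y => pd j (fun z => B z α) y) x)) :=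
    hasSum_sum fun i _ => hasSum_sum fun j _ => (hs1 i j).add (hs2 i j)
  have HS34 : HasSum
      (fun k => ∑ i, ∑ j, (σ k x i * (pd i (fun y => B y j) x * pd j (fun z => σ k z α) x)
        + σ k x i * (B x j * pd i (fun y => pd j (fun z => σ k z α) y) x)))
      (∑ i, ∑ j, (pd2 j (fun x' y' => Q x' y' i α) x x * pd i (fun y => B y j) x
        + pd2 i (fun x' y' => pd2 j (fun x'' y'' => Q x'' y'' i α) x' y') x x * B x j)) :=
    hasSum_sum fun i _ => hasSum_sum fun j _ => (hs3 i j).add (hs4 i j)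
  have HS5 : HasSum
      (fun k => ∑ i, ∑ j, (σ k x j * pd j (fun y => B y i) x) * pd i (fun z => σ k z α) x)
      (∑ i, ∑ j, pd2 i (fun x' y' => Q x' y' j α) x x * pd j (fun y => B y i) x) :=
    hasSum_sum fun i _ => hasSum_sum fun j _ => hs5 i j
  have HS6 : HasSum
      (fun k => ∑ i, ∑ j, (B x j * pd j (fun z => σ k z i) x) * pd i (fun z => σ k z α) x)
      (∑ i, ∑ j, pd1 j (fun x' y' => pd2 i (fun x'' y'' => Q x'' y'' i α) x' y') x x * B x j) :=
    hasSum_sum fun i _ => hasSum_sum fun j _ => hs6 i j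
  have H := (HS12.sub HS34).sub (HS5.sub HS6)
  have hfun : (fun k => lieBracket (σ k) (fun y β => lieBracket (σ k) B y β) x α)
      = (fun k => (∑ i, ∑ j, (σ k x i * (pd i (fun z => σ k z j) x * pd j (fun y => B y α) x)
          + σ k x i * (σ k x j * pd i (fun y => pd j (fun z => B z α) y) x)))
        - (∑ i, ∑ j, (σ k x i * (pd i (fun y => B y j) x * pd j (fun z => σ k z α) x)
          + σ k x i * (B x j * pd i (fun y => pd j (fun z => σ k z α) y) x)))
        - ((∑ i, ∑ j, (σ k x j * pd j (fun y => B y i) x) * pd i (fun z => σ k z α) x)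
          - (∑ i, ∑ j, (B x j * pd j (fun z => σ k z i) x) * pd i (fun z => σ k z α) x))) :=
    funext fun k => lie2_expand (σ k) B (hσreg k) hB x α
  rw [hfun]
  convert H using 1
  · rfl
  -- value identity
  have c1 : (∑ i : Fin d, ∑ γ : Fin d,
        pd2 γ (fun x' y' => Q x' y' γ i) x x * pd i (fun y => B y α) x)
      = ∑ i, ∑ j, pd2 i (fun x' y' => Q x' y' i j) x x * pd j (fun y => B y α) x :=
    Finset.sum_comm
  have c5 : (∑ i : Fin d, ∑ β : Fin d,
        pd2 β (fun x' y' => Q x' y' i α) x x * pd i (fun y => B y β) x)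
      = ∑ i, ∑ j, pd2 i (fun x' y' => Q x' y' j α) x x * pd j (fun y => B y i) x :=
    Finset.sum_comm
  have c6 : (∑ β : Fin d, ∑ γ : Fin d,
        pd1 β (fun x' y' => pd2 γ (fun x'' y'' => Q x'' y'' γ α) x' y') x x * B x β)
      = ∑ i, ∑ j, pd1 j (fun x' y' => pd2 i (fun x'' y'' => Q x'' y'' i α) x' y') x x * B x j :=
    Finset.sum_comm
  have c4 : (∑ β : Fin d, ∑ γ : Fin d,
        pd2 γ (fun x' y' => pd2 β (fun x'' y'' => Q x'' y'' γ α) x' y') x x * B x β)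
      = ∑ i, ∑ j, pd2 i (fun x' y' => pd2 j (fun x'' y'' => Q x'' y'' i α) x' y') x x * B x j :=
    Finset.sum_comm
  simp only [sub_mul, Finset.sum_sub_distrib, Finset.sum_mul, Finset.sum_add_distrib]
  rw [c1, c5, c6, c4]
  ring
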